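/- arXiv:1503.01284 — 2 statements merged into one kernel-verified Lean document; each statement's English description precedes it below -/
import Mathlib

section
/- Let n ≥ 2 and 1 ≤ m ≤ n−1, let E ⊂ ℝⁿ be an 𝓗ˢ-measurable set with 0 < 𝓗ˢ(E) < ∞, where s > n − m, and let V be an m-dimensional linear subspace of ℝⁿ. Then there exists an 𝓗ˢ-measurable set F ⊂ E with 𝓗ˢ(F) > 0 such that the orthogonal projection proj_V(F) has empty interior in V. -/
open MeasureTheory Set

open scoped ENNReal

/-- The fiber of the orthogonal projection over any point is `μH[s]`-null when
`s` exceeds the codimension of `V`. -/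
lemma fiber_hausdorff_null (n m : ℕ) (s : ℝ) (hs : (n : ℝ) - m < s) (hmn : m ≤ n)
    (V : Submodule ℝ (EuclideanSpace ℝ (Fin n))) (hV : Module.finrank ℝ V = m)
    (d : V) :
    μH[s] ((Submodule.orthogonalProjectionOnto V) ⁻¹' {d} : Set (EuclideanSpace ℝ (Fin n))) = 0 := by
  have hs0 : (0 : ℝ) ≤ s := by
    have : (0 : ℝ) ≤ (n : ℝ) - m := by
      have : (m : ℝ) ≤ n := by exact_mod_cast hmn
      linarith
    linarith
  -- the fiber is contained in the range of the affine map `y ↦ d + y` on `Vᗮ`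
  have hsub : ((Submodule.orthogonalProjectionOnto V) ⁻¹' {d} : Set (EuclideanSpace ℝ (Fin n)))
      ⊆ Set.range (fun y : Vᗮ => (d : EuclideanSpace ℝ (Fin n)) + (y : EuclideanSpace ℝ (Fin n))) := by
    intro x hx
    simp only [Set.mem_preimage, Set.mem_singleton_iff] at hx
    have hxd : x - (d : EuclideanSpace ℝ (Fin n)) ∈ Vᗮ := by
      rw [← Submodule.orthogonalProjectionOnto_eq_zero_iff]
      rw [map_sub, hx, Submodule.orthogonalProjectionOnto_mem_subspace_eq_self, sub_self]
    exact ⟨⟨x - d, hxd⟩, by simp⟩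
  -- dimension count
  have hdim : dimH (Set.range (fun y : Vᗮ => (d : EuclideanSpace ℝ (Fin n)) + (y : EuclideanSpace ℝ (Fin n)))) ≤ (Module.finrank ℝ Vᗮ : ℝ≥0∞) := by
    apply ContDiff.dimH_range_le
    exact contDiff_const.add (Vᗮ.subtypeL.contDiff)
  have hrank : Module.finrank ℝ Vᗮ = n - m := by
    have h1 : Module.finrank ℝ V + Module.finrank ℝ Vᗮ = Module.finrank ℝ (EuclideanSpace ℝ (Fin n)) :=
      V.finrank_add_finrank_orthogonal
    rw [hV, finrank_euclideanSpace_fin] at h1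
    omega
  have hlt : dimH ((Submodule.orthogonalProjectionOnto V) ⁻¹' {d} : Set (EuclideanSpace ℝ (Fin n)))
      < (s.toNNReal : ℝ≥0∞) := by
    refine lt_of_le_of_lt ((dimH_mono hsub).trans hdim) ?_
    rw [hrank]
    have : ((n - m : ℕ) : ℝ) < (s.toNNReal : ℝ) := by
      rw [Real.coe_toNNReal s hs0]
      have : ((n - m : ℕ) : ℝ) = (n : ℝ) - m := by
        push_cast [Nat.cast_sub hmn]
        ring
      linarith [this ▸ hs]
    exact_mod_cast ENNReal.coe_lt_coe.mpr (by exact_mod_cast this)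
  have := hausdorffMeasure_of_dimH_lt hlt
  rwa [Real.coe_toNNReal s hs0] at this

/-- **Failure of the strong non-empty-interior projection theorem.** Let `1 ≤ m ≤ n−1`,
let `E ⊆ ℝⁿ` be `𝓗ˢ`-measurable with `0 < 𝓗ˢ(E) < ∞` where `s > n − m`, and let `V` be an
`m`-dimensional subspace of `ℝⁿ`. Then there is an `𝓗ˢ`-measurable `F ⊆ E` with
`𝓗ˢ(F) > 0` whose orthogonal projection to `V` has empty interior in `V`. -/
theorem exists_subset_projection_empty_interior (n m : ℕ) (hn : 2 ≤ n)
    (hm1 : 1 ≤ m) (hm2 : m ≤ n - 1) (s : ℝ) (hs : (n : ℝ) - m < s)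
    (E : Set (EuclideanSpace ℝ (Fin n)))
    (hE : NullMeasurableSet E μH[s])
    (hE0 : 0 < μH[s] E) (hEfin : μH[s] E < ⊤)
    (V : Submodule ℝ (EuclideanSpace ℝ (Fin n))) (hV : Module.finrank ℝ V = m) :
    ∃ F : Set (EuclideanSpace ℝ (Fin n)), F ⊆ E ∧
      NullMeasurableSet F μH[s] ∧ 0 < μH[s] F ∧
      interior ((Submodule.orthogonalProjectionOnto V) '' F) = (∅ : Set V) := by
  have hmn : m ≤ n := le_trans hm2 (Nat.sub_le n 1)
  -- countable dense subset of V
  obtain ⟨D, hDc, hDd⟩ := TopologicalSpace.exists_countable_dense (↥V)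
  -- the union of fibers over D is null
  set N : Set (EuclideanSpace ℝ (Fin n)) := (Submodule.orthogonalProjectionOnto V) ⁻¹' D with hN
  have hNnull : μH[s] N = 0 := by
    have : N = ⋃ d ∈ D, (Submodule.orthogonalProjectionOnto V) ⁻¹' {d} := by
      ext x; simp [N]
    rw [this]
    exact (measure_biUnion_null_iff hDc).mpr fun d _ =>
      fiber_hausdorff_null n m s hs hmn V hV d
  refine ⟨E \ N, diff_subset, hE.diff (NullMeasurableSet.of_null hNnull), ?_, ?_⟩
  · rwa [measure_diff_null hNnull]
  · have hsub : (Submodule.orthogonalProjectionOnto V) '' (E \ N) ⊆ Dᶜ := by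
      rintro _ ⟨x, ⟨_, hxN⟩, rfl⟩
      exact hxN
    have : interior ((Submodule.orthogonalProjectionOnto V) '' (E \ N)) ⊆ interior Dᶜ :=
      interior_mono hsub
    rwa [interior_compl, hDd.closure_eq, compl_univ, subset_empty_iff] at this
end

section
/- Let E ⊂ ℝⁿ be an 𝓗ˢ-measurable set with 0 < 𝓗ˢ(E) < ∞, where s > 0. Then there exists a countable collection (E_i)_{i≥1} of pairwise disjoint 𝓗ˢ-measurable subsets of E with 𝓗ˢ(E \ ⋃_{i≥1} E_i) = 0, and positive constants c_i > 0, such that for every i, every x ∈ E_i and every r > 0, 𝓗ˢ(E_i ∩ B(x,r)) ≤ c_i rˢ. -/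
open MeasureTheory

section AuxDensityDecomposition
open Metric Set Filter Topology
open scoped ENNReal

lemma isOpen_measure_closedBall_lt {X : Type*} [MetricSpace X] [MeasurableSpace X]
    [OpensMeasurableSpace X] (ν : Measure X) (hν : ν Set.univ ≠ ⊤) (a : ℝ) (c : ℝ≥0∞) :
    IsOpen {x | ν (Metric.closedBall x a) < c} := by
  rw [Metric.isOpen_iff]
  intro y hy
  simp only [mem_setOf_eq] at hy
  have hiff : ⋂ n : ℕ, Metric.closedBall y (a + 1 / (n + 1)) = Metric.closedBall y a := by
    ext z
    simp only [mem_iInter, mem_closedBall]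
    constructor
    · intro h
      by_contra hc
      push_neg at hc
      obtain ⟨n, hn⟩ := exists_nat_one_div_lt (sub_pos.2 hc)
      have := h n
      linarith
    · intro h n
      have : (0:ℝ) < 1 / (n + 1) := by positivity
      linarith
  have htd : Tendsto (fun n : ℕ => ν (Metric.closedBall y (a + 1 / (n + 1)))) atTop
      (𝓝 (ν (Metric.closedBall y a))) := by
    rw [show Metric.closedBall y a = ⋂ n : ℕ, Metric.closedBall y (a + 1 / (n + 1)) from hiff.symm]
    apply tendsto_measure_iInter_atTop
    · exact fun n => measurableSet_closedBall.nullMeasurableSet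
    · intro m n hmn
      apply closedBall_subset_closedBall
      have : (1:ℝ) / (n + 1) ≤ 1 / (m + 1) := by
        apply one_div_le_one_div_of_le (by positivity) (by exact_mod_cast by omega)
      linarith
    · exact ⟨0, ((measure_mono (subset_univ _)).trans_lt hν.lt_top).ne⟩
  obtain ⟨N, hN⟩ := (htd.eventually_lt_const hy).exists
  refine ⟨1 / (N + 1), by positivity, fun z hz => ?_⟩
  simp only [mem_setOf_eq]
  refine lt_of_le_of_lt (measure_mono (closedBall_subset_closedBall' ?_)) hN
  rw [mem_ball] at hz
  linarith

lemma measurableSet_measure_closedBall_le {X : Type*} [MetricSpace X] [MeasurableSpace X]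
    [OpensMeasurableSpace X] (ν : Measure X) (hν : ν Set.univ ≠ ⊤) (a : ℝ) (c : ℝ≥0∞)
    (hc : c ≠ ⊤) : MeasurableSet {x | ν (Metric.closedBall x a) ≤ c} := by
  have hrw : {x | ν (Metric.closedBall x a) ≤ c}
      = ⋂ m : ℕ, {x | ν (Metric.closedBall x a) < c + (↑(m + 1) : ℝ≥0∞)⁻¹} := by
    ext x
    simp only [mem_setOf_eq, mem_iInter]
    constructor
    · intro h m
      refine h.trans_lt (ENNReal.lt_add_right hc ?_)
      simp
    · intro h
      by_contra hlt
      push_neg at hlt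
      obtain ⟨ε, hε, hlt'⟩ := ENNReal.lt_iff_exists_add_pos_lt.mp hlt
      obtain ⟨m, hm⟩ := ENNReal.exists_inv_nat_lt (show (ε : ℝ≥0∞) ≠ 0 by
        simpa using hε.ne')
      have h1 : ((↑(m + 1) : ℝ≥0∞))⁻¹ ≤ (↑m : ℝ≥0∞)⁻¹ := by
        gcongr; exact_mod_cast by omega
      have := (h m).trans_le (add_le_add_right (h1.trans hm.le) c)
      exact absurd (hlt'.trans this) (lt_irrefl _)
  rw [hrw]
  exact MeasurableSet.iInter fun m =>
    (isOpen_measure_closedBall_lt ν hν a _).measurableSet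

lemma diam_cb_le {X : Type*} [PseudoMetricSpace X] (x : X) (a : ℝ) :
    EMetric.diam (Metric.closedBall x a) ≤ ENNReal.ofReal (2 * a) := by
  apply EMetric.diam_le
  intro y hy z hz
  rw [edist_dist]
  apply ENNReal.ofReal_le_ofReal
  calc dist y z ≤ dist y x + dist x z := dist_triangle _ _ _
  _ ≤ a + a := by
      rw [mem_closedBall] at hy hz
      rw [dist_comm x z] at *
      linarith
  _ = 2 * a := by ring

lemma density_le {X : Type*} [MetricSpace X] [MeasurableSpace X] [BorelSpace X]
    (s t : ℝ) (hs : 0 < s) (ht : 0 < t) (ν : Measure X) (hν : ν Set.univ ≠ ⊤) :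
    μH[s] {x | ∀ ε : ℝ, 0 < ε → ∃ r, 0 < r ∧ r ≤ ε ∧
        ENNReal.ofReal (t * r ^ s) < ν (Metric.closedBall x r)}
      ≤ ENNReal.ofReal (8 ^ s / t) * ν Set.univ := by
  set A := {x | ∀ ε : ℝ, 0 < ε → ∃ r, 0 < r ∧ r ≤ ε ∧
      ENNReal.ofReal (t * r ^ s) < ν (Metric.closedBall x r)} with hA
  set T : ℕ → Set (X × ℝ) := fun n => {p | p.1 ∈ A ∧ 0 < p.2 ∧ p.2 ≤ 1 / (n + 1) ∧
      ENNReal.ofReal (t * p.2 ^ s) < ν (Metric.closedBall p.1 p.2)} with hT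
  have hvit : ∀ n : ℕ, ∃ u ⊆ T n,
      (u.PairwiseDisjoint fun p : X × ℝ => Metric.closedBall p.1 p.2) ∧
      ∀ p ∈ T n, ∃ q ∈ u, Metric.closedBall p.1 p.2 ⊆ Metric.closedBall q.1 (4 * q.2) := by
    intro n
    exact Vitali.exists_disjoint_subfamily_covering_enlargement_closedBall (T n)
      Prod.fst Prod.snd (1 / (n + 1)) (fun p hp => hp.2.2.1) 4 (by norm_num)
  choose u husub hudisj hucov using hvit
  have hupos : ∀ n, ∀ p ∈ u n, 0 < ν (Metric.closedBall p.1 p.2) := fun n p hp =>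
    zero_le.trans_lt (husub n hp).2.2.2
  have hucount : ∀ n, (u n).Countable := by
    intro n
    have := Measure.countable_meas_pos_of_disjoint_of_meas_iUnion_ne_top
      (μ := ν) (As := fun b : ↥(u n) => Metric.closedBall b.1.1 b.1.2)
      (fun b => measurableSet_closedBall)
      (fun b c hbc => hudisj n b.2 c.2 (fun h => hbc (Subtype.ext h)))
      (((measure_mono (subset_univ _)).trans_lt hν.lt_top).ne)
    have huniv : {b : ↥(u n) | 0 < ν (Metric.closedBall b.1.1 b.1.2)} = Set.univ := by
      ext b; simpa using hupos n b.1 b.2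
    rw [huniv, Set.countable_univ_iff] at this
    exact Set.countable_coe_iff.mp (by exact this)
  haveI : ∀ n, Countable ↥(u n) := fun n => (hucount n).to_subtype
  have key := Measure.hausdorffMeasure_le_liminf_tsum (ι := fun n => ↥(u n)) s A
    (fun n => ENNReal.ofReal (8 / (n + 1)))
    (by
      rw [show (0:ℝ≥0∞) = ENNReal.ofReal 0 by simp]
      apply ENNReal.tendsto_ofReal
      have h8 : Tendsto (fun n : ℕ => 8 * (1 / ((n:ℝ) + 1))) atTop (𝓝 (8 * 0)) :=
        tendsto_const_nhds.mul tendsto_one_div_add_atTop_nhds_zero_nat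
      simpa [div_eq_mul_inv] using h8)
    (fun n b => Metric.closedBall b.1.1 (4 * b.1.2))
    (by
      refine Eventually.of_forall fun n => fun b => ?_
      refine (diam_cb_le _ _).trans (ENNReal.ofReal_le_ofReal ?_)
      have h1 : (0:ℝ) < b.1.2 := (husub n b.2).2.1
      have h2 : b.1.2 ≤ 1 / (n + 1) := (husub n b.2).2.2.1
      rw [show (8:ℝ)/(n+1) = 8 * (1/((n:ℝ)+1)) by ring]
      linarith)
    (by
      refine Eventually.of_forall fun n => fun x hx => ?_
      obtain ⟨r, hr0, hrle, hrlt⟩ := hx (1 / (n + 1)) (by positivity)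
      obtain ⟨q, hq, hsub⟩ := hucov n (x, r) ⟨hx, hr0, hrle, hrlt⟩
      exact Set.mem_iUnion.2 ⟨⟨q, hq⟩, hsub (mem_closedBall_self hr0.le)⟩)
  refine key.trans ?_
  refine Filter.liminf_le_of_frequently_le (Frequently.of_forall fun n => ?_)
  calc ∑' b : ↥(u n), EMetric.diam (Metric.closedBall b.1.1 (4 * b.1.2)) ^ s
      ≤ ∑' b : ↥(u n), ENNReal.ofReal (8 ^ s / t) * ν (Metric.closedBall b.1.1 b.1.2) := by
        apply ENNReal.tsum_le_tsum
        intro b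
        have h1 : (0:ℝ) < b.1.2 := (husub n b.2).2.1
        have step1 : EMetric.diam (Metric.closedBall b.1.1 (4 * b.1.2)) ^ s
            ≤ ENNReal.ofReal (8 * b.1.2) ^ s := by
          apply ENNReal.rpow_le_rpow _ hs.le
          refine (diam_cb_le _ _).trans (ENNReal.ofReal_le_ofReal (by linarith))
        refine step1.trans ?_
        rw [ENNReal.ofReal_rpow_of_pos (by linarith)]
        have harith : (8 * b.1.2) ^ s = (8 ^ s / t) * (t * b.1.2 ^ s) := by
          rw [Real.mul_rpow (by norm_num) h1.le]
          field_simp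
        rw [harith, ENNReal.ofReal_mul (by positivity)]
        exact mul_le_mul_right (husub n b.2).2.2.2.le _
    _ = ENNReal.ofReal (8 ^ s / t) * ∑' b : ↥(u n), ν (Metric.closedBall b.1.1 b.1.2) :=
        ENNReal.tsum_mul_left
    _ ≤ ENNReal.ofReal (8 ^ s / t) * ν Set.univ := by
        apply mul_le_mul_right
        rw [← measure_biUnion (hucount n) (hudisj n) (fun b _ => measurableSet_closedBall)]
        exact measure_mono (subset_univ _)

end AuxDensityDecomposition

open Metric Set Filter Topology
open scoped ENNReal
/-- **Decomposition into pieces of controlled upper density.** If `E ⊆ ℝⁿ` is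
`𝓗ˢ`-measurable with `0 < 𝓗ˢ(E) < ∞`, `s > 0`, then there are pairwise disjoint
`𝓗ˢ`-measurable subsets `E_i ⊆ E` covering `𝓗ˢ`-almost all of `E`, and constants
`c_i > 0`, with `𝓗ˢ(E_i ∩ B(x,r)) ≤ c_i rˢ` for all `x ∈ E_i` and `r > 0`. -/
theorem exists_density_decomposition (n : ℕ) (s : ℝ) (hs : 0 < s)
    (E : Set (EuclideanSpace ℝ (Fin n)))
    (hE : NullMeasurableSet E μH[s])
    (hE0 : 0 < μH[s] E) (hEfin : μH[s] E < ⊤) :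
    ∃ (Ei : ℕ → Set (EuclideanSpace ℝ (Fin n))) (c : ℕ → ℝ),
      (∀ i, Ei i ⊆ E) ∧
      (∀ i, NullMeasurableSet (Ei i) μH[s]) ∧
      Pairwise (Function.onFun Disjoint Ei) ∧
      μH[s] (E \ ⋃ i, Ei i) = 0 ∧
      ∀ i, 0 < c i ∧ ∀ x ∈ Ei i, ∀ r : ℝ, 0 < r →
        μH[s] (Ei i ∩ Metric.closedBall x r) ≤ ENNReal.ofReal (c i * r ^ s) := by
  classical
  obtain ⟨E', hE'sub, hE'meas, hE'ae⟩ := hE.exists_measurable_subset_ae_eq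
  set ν : Measure (EuclideanSpace ℝ (Fin n)) := μH[s].restrict E' with hνdef
  have hE'fin : μH[s] E' < ⊤ := (measure_mono hE'sub).trans_lt hEfin
  have hνfin : ν Set.univ ≠ ⊤ := by
    rw [hνdef, Measure.restrict_apply_univ]; exact hE'fin.ne
  -- the bad set of infinite upper density
  set A : ℝ → Set (EuclideanSpace ℝ (Fin n)) := fun t =>
    {x | ∀ ε : ℝ, 0 < ε → ∃ r, 0 < r ∧ r ≤ ε ∧
      ENNReal.ofReal (t * r ^ s) < ν (Metric.closedBall x r)} with hAdef
  have hAnull : μH[s] (⋂ k : ℕ, A (k + 1)) = 0 := by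
    refine le_antisymm ?_ zero_le
    have hle : ∀ k : ℕ, μH[s] (⋂ k : ℕ, A (k + 1))
        ≤ ENNReal.ofReal (8 ^ s / (k + 1)) * ν Set.univ := fun k =>
      (measure_mono (iInter_subset _ k)).trans
        (density_le s (k + 1) hs (by positivity) ν hνfin)
    have htend : Tendsto (fun k : ℕ => ENNReal.ofReal (8 ^ s / (k + 1)) * ν Set.univ)
        atTop (𝓝 0) := by
      have h1 : Tendsto (fun k : ℕ => ENNReal.ofReal (8 ^ s / (k + 1))) atTop (𝓝 0) := by
        rw [show (0:ℝ≥0∞) = ENNReal.ofReal 0 by simp]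
        apply ENNReal.tendsto_ofReal
        have h8 : Tendsto (fun k : ℕ => (8:ℝ) ^ s * (1 / ((k:ℝ) + 1))) atTop
            (𝓝 ((8:ℝ) ^ s * 0)) :=
          tendsto_const_nhds.mul tendsto_one_div_add_atTop_nhds_zero_nat
        have heq : (fun k : ℕ => (8:ℝ) ^ s / ((k:ℝ) + 1))
            = fun k : ℕ => (8:ℝ) ^ s * (1 / ((k:ℝ) + 1)) := by funext k; ring
        rw [heq]
        simpa using h8
      simpa using ENNReal.Tendsto.mul_const h1 (Or.inr hνfin)
    exact ge_of_tendsto htend (Eventually.of_forall hle)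
  -- the good sets
  set G : ℕ → Set (EuclideanSpace ℝ (Fin n)) := fun k =>
    E' ∩ {x | ∀ q : ℚ, 0 < (q:ℝ) → (q:ℝ) ≤ 1 / (k + 1) →
      ν (Metric.closedBall x q) ≤ ENNReal.ofReal ((k + 1) * (q:ℝ) ^ s)} with hGdef
  have hGE' : ∀ k, G k ⊆ E' := fun k => inter_subset_left
  have hGmeas : ∀ k, MeasurableSet (G k) := by
    intro k
    refine hE'meas.inter ?_
    have : {x : EuclideanSpace ℝ (Fin n) | ∀ q : ℚ, 0 < (q:ℝ) → (q:ℝ) ≤ 1 / (k + 1) →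
        ν (Metric.closedBall x q) ≤ ENNReal.ofReal ((k + 1) * (q:ℝ) ^ s)}
        = ⋂ q : ℚ, {x | 0 < (q:ℝ) → (q:ℝ) ≤ 1 / (k + 1) →
          ν (Metric.closedBall x q) ≤ ENNReal.ofReal ((k + 1) * (q:ℝ) ^ s)} := by
      ext x; simp [mem_iInter]
    rw [this]
    refine MeasurableSet.iInter fun q => ?_
    by_cases hq : 0 < (q:ℝ) ∧ (q:ℝ) ≤ 1 / (k + 1)
    · have heq : {x : EuclideanSpace ℝ (Fin n) | 0 < (q:ℝ) → (q:ℝ) ≤ 1 / (k + 1) →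
          ν (Metric.closedBall x q) ≤ ENNReal.ofReal ((k + 1) * (q:ℝ) ^ s)}
          = {x | ν (Metric.closedBall x q) ≤ ENNReal.ofReal ((k + 1) * (q:ℝ) ^ s)} := by
        ext x
        exact ⟨fun h => h hq.1 hq.2, fun h _ _ => h⟩
      rw [heq]
      exact measurableSet_measure_closedBall_le ν hνfin _ _ ENNReal.ofReal_ne_top
    · have heq : {x : EuclideanSpace ℝ (Fin n) | 0 < (q:ℝ) → (q:ℝ) ≤ 1 / (k + 1) →
          ν (Metric.closedBall x q) ≤ ENNReal.ofReal ((k + 1) * (q:ℝ) ^ s)} = univ := by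
        ext x
        simp only [mem_setOf_eq, mem_univ, iff_true]
        intro h1 h2
        exact absurd ⟨h1, h2⟩ hq
      rw [heq]
      exact MeasurableSet.univ
  -- real-radius estimate on G k
  have hGest : ∀ k : ℕ, ∀ x ∈ G k, ∀ r : ℝ, 0 < r → r ≤ 1 / (k + 1) →
      ν (Metric.closedBall x r) ≤ ENNReal.ofReal ((k + 1) * 2 ^ s * r ^ s) := by
    intro k x hx r hr0 hrle
    obtain ⟨q, hq1, hq2, hq3⟩ : ∃ q : ℚ, r ≤ (q:ℝ) ∧ (q:ℝ) ≤ 1 / (k + 1) ∧ (q:ℝ) ≤ 2 * r := by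
      by_cases h2 : 2 * r ≤ 1 / (k + 1)
      · obtain ⟨q, hq1, hq2⟩ := exists_rat_btwn (show r < 2 * r by linarith)
        exact ⟨q, hq1.le, hq2.le.trans h2, hq2.le⟩
      · push_neg at h2
        refine ⟨1 / ((k:ℚ) + 1), ?_, ?_, ?_⟩
        · push_cast
          exact hrle
        · push_cast
          exact le_rfl
        · push_cast
          linarith
    have hq0 : 0 < (q:ℝ) := hr0.trans_le hq1
    calc ν (Metric.closedBall x r) ≤ ν (Metric.closedBall x q) :=
          measure_mono (closedBall_subset_closedBall hq1)
      _ ≤ ENNReal.ofReal ((k + 1) * (q:ℝ) ^ s) := hx.2 q hq0 hq2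
      _ ≤ ENNReal.ofReal ((k + 1) * 2 ^ s * r ^ s) := by
          apply ENNReal.ofReal_le_ofReal
          have h1 : (q:ℝ) ^ s ≤ (2 * r) ^ s := Real.rpow_le_rpow hq0.le hq3 hs.le
          have h2 : (2 * r) ^ s = 2 ^ s * r ^ s := Real.mul_rpow (by norm_num) hr0.le
          have h3 : (0:ℝ) < (k:ℝ) + 1 := by positivity
          nlinarith [h1, h2]
  -- coverage
  have hGcover : E' \ (⋃ k, G k) ⊆ ⋂ k : ℕ, A (k + 1) := by
    intro x hx
    rw [mem_iInter]
    intro k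
    by_contra hcon
    simp only [hAdef, mem_setOf_eq, not_forall, not_exists] at hcon
    obtain ⟨ε, hε0, hcon⟩ := hcon
    push_neg at hcon
    obtain ⟨m, hm⟩ := exists_nat_one_div_lt hε0
    refine hx.2 (mem_iUnion.2 ⟨max k m, hx.1, fun q hq0 hqle => ?_⟩)
    have hq2 : (q:ℝ) ≤ ε := by
      refine hqle.trans ?_
      have h1 : (1:ℝ) / (max k m + 1) ≤ 1 / (m + 1) := by
        apply one_div_le_one_div_of_le (by positivity)
        have : (m:ℝ) ≤ max k m := by exact_mod_cast le_max_right k m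
        linarith
      linarith
    have := hcon q hq0 hq2
    refine this.trans (ENNReal.ofReal_le_ofReal ?_)
    have h1 : (k:ℝ) + 1 ≤ (max k m : ℕ) + 1 := by
      have : (k:ℝ) ≤ (max k m : ℕ) := by exact_mod_cast le_max_left k m
      linarith
    have h2 : 0 ≤ (q:ℝ) ^ s := Real.rpow_nonneg hq0.le s
    nlinarith
  -- assemble
  refine ⟨disjointed G, fun i => ((i:ℝ) + 1) * 2 ^ s
      + ((μH[s] E).toReal + 1) * ((i:ℝ) + 1) ^ s, ?_, ?_, ?_, ?_, ?_⟩
  · exact fun i => (disjointed_subset G i).trans ((hGE' i).trans hE'sub)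
  · exact fun i => (MeasurableSet.disjointed hGmeas i).nullMeasurableSet
  · exact disjoint_disjointed G
  · rw [iUnion_disjointed]
    have hsub : E \ ⋃ k, G k ⊆ (E \ E') ∪ (E' \ ⋃ k, G k) := by
      intro x hx
      by_cases h : x ∈ E'
      · exact Or.inr ⟨h, hx.2⟩
      · exact Or.inl ⟨hx.1, h⟩
    refine le_antisymm ((measure_mono hsub).trans ?_) zero_le
    refine (measure_union_le _ _).trans ?_
    have h1 : μH[s] (E \ E') = 0 := (ae_eq_set.mp hE'ae).2
    have h2 : μH[s] (E' \ ⋃ k, G k) = 0 :=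
      le_antisymm ((measure_mono hGcover).trans_eq hAnull) zero_le
    rw [h1, h2, add_zero]
  · intro i
    have hM : 0 ≤ (μH[s] E).toReal := ENNReal.toReal_nonneg
    have hp1 : (0:ℝ) < ((i:ℝ) + 1) * 2 ^ s := by positivity
    have hp2 : (0:ℝ) ≤ ((μH[s] E).toReal + 1) * ((i:ℝ) + 1) ^ s := by
      apply mul_nonneg (by linarith) (Real.rpow_nonneg (by positivity) s)
    refine ⟨?_, fun x hx r hr0 => ?_⟩
    · show (0:ℝ) < ((i:ℝ) + 1) * 2 ^ s + ((μH[s] E).toReal + 1) * ((i:ℝ) + 1) ^ s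
      linarith
    have hxG : x ∈ G i := disjointed_subset G i hx
    have hrs : (0:ℝ) ≤ r ^ s := Real.rpow_nonneg hr0.le s
    rcases le_or_gt r (1 / (i + 1)) with hle | hlt
    · calc μH[s] (disjointed G i ∩ Metric.closedBall x r)
          ≤ μH[s] (Metric.closedBall x r ∩ E') := by
            apply measure_mono
            intro y hy
            exact ⟨hy.2, hGE' i (disjointed_subset G i hy.1)⟩
        _ = ν (Metric.closedBall x r) := (Measure.restrict_apply measurableSet_closedBall).symm
        _ ≤ ENNReal.ofReal (((i:ℝ) + 1) * 2 ^ s * r ^ s) := hGest i x hxG r hr0 hle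
        _ ≤ _ := by
            apply ENNReal.ofReal_le_ofReal
            show ((i:ℝ) + 1) * 2 ^ s * r ^ s ≤ (((i:ℝ) + 1) * 2 ^ s
              + ((μH[s] E).toReal + 1) * ((i:ℝ) + 1) ^ s) * r ^ s
            nlinarith [mul_nonneg hp2 hrs]
    · calc μH[s] (disjointed G i ∩ Metric.closedBall x r) ≤ μH[s] E' := by
            apply measure_mono
            exact fun y hy => hGE' i (disjointed_subset G i hy.1)
        _ = μH[s] E := measure_congr hE'ae
        _ = ENNReal.ofReal (μH[s] E).toReal := (ENNReal.ofReal_toReal hEfin.ne).symm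
        _ ≤ _ := by
            apply ENNReal.ofReal_le_ofReal
            have h1 : (1:ℝ) ≤ ((i:ℝ) + 1) * r := by
              rw [div_lt_iff₀ (by positivity : (0:ℝ) < (i:ℝ) + 1)] at hlt
              nlinarith
            have h2 : (1:ℝ) ≤ ((i:ℝ) + 1) ^ s * r ^ s := by
              rw [← Real.mul_rpow (by positivity) hr0.le]
              calc (1:ℝ) = 1 ^ s := (Real.one_rpow s).symm
              _ ≤ (((i:ℝ) + 1) * r) ^ s := Real.rpow_le_rpow (by norm_num) h1 hs.le
            show (μH[s] E).toReal ≤ (((i:ℝ) + 1) * 2 ^ s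
              + ((μH[s] E).toReal + 1) * ((i:ℝ) + 1) ^ s) * r ^ s
            nlinarith [mul_nonneg hp1.le hrs,
              mul_le_mul_of_nonneg_left h2 (by linarith : (0:ℝ) ≤ (μH[s] E).toReal + 1)]
end
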